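/- Let (P,≻,q) be a problem in which all schools have a common priority order and let k > 1. Then SD^k(P,≻,q) is stable at (P,≻,q) if and only if the constrained serial dictatorship mechanism SD^k is not manipulable at (P,≻,q). -/

import Mathlib

/-!
School choice framework following Bonkoungou–Nesterov,
"Reforms meet fairness concerns in school and college admissions".

Students `I` and schools `S` are finite types with `|I| > |S|`.
A strict preference relation of a student over `S ∪ {∅}` is represented by a list
of `Option S` containing every element exactly once (earlier = more preferred);
`none` is the outside option.  A strict priority order of a school is a list of
`I` containing every student exactly once (earlier = higher priority).
-/

namespace SchoolChoice

variable {I S : Type*} [Fintype I] [DecidableEq I] [Fintype S] [DecidableEq S]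

/-- `p` is a strict preference relation on `S ∪ {∅}`: a ranking list containing every
element of `Option S` exactly once. -/
def ValidPref (p : List (Option S)) : Prop := p.Nodup ∧ ∀ x : Option S, x ∈ p

/-- `pr` is a strict priority order: a ranking list containing every student exactly once. -/
def ValidPrio (pr : List I) : Prop := pr.Nodup ∧ ∀ i : I, i ∈ pr

/-- `a` is strictly preferred to `b` under the preference relation `p`. -/
def prefLt (p : List (Option S)) (a b : Option S) : Prop := p.idxOf a < p.idxOf b

/-- `i` has strictly higher priority than `j` under the priority order `pr`. -/
def prioLt (pr : List I) (i j : I) : Prop := pr.idxOf i < pr.idxOf j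

instance (p : List (Option S)) (a b : Option S) : Decidable (prefLt p a b) :=
  inferInstanceAs (Decidable (_ < _))

instance (pr : List I) (i j : I) : Decidable (prioLt pr i j) :=
  inferInstanceAs (Decidable (_ < _))

/-- The acceptable schools of `p` (those preferred to the outside option), in preference
order. -/
def acceptables (p : List (Option S)) : List S := (p.takeWhile Option.isSome).filterMap id

/-- The truncation of `p` after its `k`-th acceptable school: the preference relation
listing, in the same order, only the `min k _` most-preferred acceptable schools of `p`,
all other schools being unacceptable (kept below `none` in their original order). -/
def truncate (p : List (Option S)) (k : ℕ) : List (Option S) :=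
  ((acceptables p).take k).map some ++
    none :: p.filter (fun x => decide (x ≠ none ∧ x ∉ ((acceptables p).take k).map some))

/-- `μ` is a matching: it respects the capacities `q`. -/
def IsMatching (q : S → ℕ) (μ : I → Option S) : Prop :=
  ∀ s : S, (Finset.univ.filter (fun i => μ i = some s)).card ≤ q s

/-- The pair `(i, s)` blocks `μ` under the problem `(P, prio, q)`. -/
def Blocks (P : I → List (Option S)) (prio : S → List I) (q : S → ℕ)
    (μ : I → Option S) (i : I) (s : S) : Prop :=
  prefLt (P i) (some s) (μ i) ∧
    ((Finset.univ.filter (fun j => μ j = some s)).card < q s ∨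
      ∃ j : I, μ j = some s ∧ prioLt (prio s) i j)

/-- `i` is a blocking student for `μ` under `(P, prio, q)`. -/
def BlockingStudent (P : I → List (Option S)) (prio : S → List I) (q : S → ℕ)
    (μ : I → Option S) (i : I) : Prop :=
  ∃ s : S, Blocks P prio q μ i s

/-- `μ` is individually rational under `P`. -/
def IndividuallyRational (P : I → List (Option S)) (μ : I → Option S) : Prop :=
  ∀ i : I, ¬ prefLt (P i) none (μ i)

/-- `μ` is stable at `(P, prio, q)`. -/
def IsStable (P : I → List (Option S)) (prio : S → List I) (q : S → ℕ)
    (μ : I → Option S) : Prop :=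
  IndividuallyRational P μ ∧ ∀ i : I, ¬ BlockingStudent P prio q μ i

/-- The number of blocking students for `μ` under `(P, prio, q)`. -/
noncomputable def numBlocking (P : I → List (Option S)) (prio : S → List I) (q : S → ℕ)
    (μ : I → Option S) : ℕ :=
  {i : I | BlockingStudent P prio q μ i}.ncard

/-! ### The Gale–Shapley student-proposing deferred acceptance mechanism

The state `σ : I → ℕ` records, for each student, how many of her acceptable schools
have already rejected her; she currently applies to the `σ i`-th school on her list
(if any).  At each round every school tentatively keeps the `q s` highest-priority
students among its current applicants and rejects the rest, who move on. -/

/-- The school student `i` currently applies to. -/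
def daTarget (P : I → List (Option S)) (σ : I → ℕ) (i : I) : Option S :=
  (acceptables (P i))[σ i]?

/-- The students tentatively held by school `s`: the `q s` highest-priority current
applicants. -/
def daHeld (P : I → List (Option S)) (prio : S → List I) (q : S → ℕ)
    (σ : I → ℕ) (s : S) : List I :=
  ((prio s).filter (fun i => decide (daTarget P σ i = some s))).take (q s)

/-- One round of deferred acceptance: every rejected student moves to her next choice. -/
def daStep (P : I → List (Option S)) (prio : S → List I) (q : S → ℕ)
    (σ : I → ℕ) : I → ℕ := fun i =>
  match daTarget P σ i with
  | none => σ i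
  | some s => if i ∈ daHeld P prio q σ s then σ i else σ i + 1

/-- The Gale–Shapley (student-proposing deferred acceptance) mechanism.  Iterating the
round map `|I| * |S| + 1` times is guaranteed to reach the terminal state. -/
def GS (P : I → List (Option S)) (prio : S → List I) (q : S → ℕ) : I → Option S :=
  fun i =>
    let σ := (daStep P prio q)^[Fintype.card I * Fintype.card S + 1] (fun _ => 0)
    match daTarget P σ i with
    | none => none
    | some s => if i ∈ daHeld P prio q σ s then some s else none

/-- The constrained Gale–Shapley mechanism `GS^k`. -/
def GSk (k : ℕ) (P : I → List (Option S)) (prio : S → List I) (q : S → ℕ) : I → Option S :=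
  GS (fun i => truncate (P i) k) prio q

/-! ### The Boston (immediate acceptance) mechanism -/

/-- Round `t` of the Boston mechanism: each not-yet-accepted student applies to her
`t`-th ranked acceptable school (0-indexed), and each school permanently accepts, up to
its remaining capacity, its highest-priority new applicants. -/
def bostonRound (P : I → List (Option S)) (prio : S → List I) (q : S → ℕ)
    (μ : I → Option S) (t : ℕ) : I → Option S := fun i =>
  match μ i with
  | some s => some s
  | none =>
    match (acceptables (P i))[t]? with
    | none => none
    | some s =>
      if i ∈ ((prio s).filter
            (fun j => decide (μ j = none ∧ (acceptables (P j))[t]? = some s))).take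
          (q s - (Finset.univ.filter (fun j => μ j = some s)).card)
      then some s else none

/-- The Boston (immediate acceptance) mechanism. -/
def Boston (P : I → List (Option S)) (prio : S → List I) (q : S → ℕ) : I → Option S :=
  (List.range (Fintype.card S)).foldl (bostonRound P prio q) (fun _ => none)

/-- The constrained Boston mechanism `β^k`. -/
def Bostonk (k : ℕ) (P : I → List (Option S)) (prio : S → List I) (q : S → ℕ) :
    I → Option S :=
  Boston (fun i => truncate (P i) k) prio q

/-! ### The first-preference-first mechanism -/

/-- The adjusted priority profile: each first-preference-first school (member of `fpf`)
ranks students first by the rank they assign to it under `P` (counting the ranking of the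
outside option as well), ties broken by the original priority; equal-preference schools
keep their original priority. -/
def fpfPrio (fpf : Finset S) (P : I → List (Option S)) (prio : S → List I) : S → List I :=
  fun s =>
    if s ∈ fpf then
      (List.range (Fintype.card S + 1)).flatMap
        (fun r => (prio s).filter (fun i => decide ((P i).idxOf (some s) = r)))
    else prio s

/-- The first-preference-first mechanism with set `fpf` of first-preference-first
schools: Gale–Shapley run on the adjusted priorities. -/
def FPF (fpf : Finset S) (P : I → List (Option S)) (prio : S → List I) (q : S → ℕ) :
    I → Option S :=
  GS P (fpfPrio fpf P prio) q

/-- The constrained first-preference-first mechanism `FPF^k`. -/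
def FPFk (fpf : Finset S) (k : ℕ) (P : I → List (Option S)) (prio : S → List I)
    (q : S → ℕ) : I → Option S :=
  FPF fpf (fun i => truncate (P i) k) prio q

/-! ### Manipulation and equilibrium notions -/

/-- Student `i` is a manipulating student of the mechanism `φ` (with priorities and
capacities fixed) at the true profile `P`. -/
def ManipulatingStudent (φ : (I → List (Option S)) → I → Option S)
    (P : I → List (Option S)) (i : I) : Prop :=
  ∃ Q : List (Option S), ValidPref Q ∧
    prefLt (P i) (φ (Function.update P i Q) i) (φ P i)

/-- The mechanism `φ` is not manipulable at `P`. -/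
def NotManipulable (φ : (I → List (Option S)) → I → Option S)
    (P : I → List (Option S)) : Prop :=
  ∀ i : I, ¬ ManipulatingStudent φ P i

/-- `P'` is a Nash equilibrium of the game `(φ, P)` in which the sophisticated students
are the members of `M` (who may misreport, and best respond) and all other (sincere)
students report truthfully. -/
def NashEq (φ : (I → List (Option S)) → I → Option S) (P : I → List (Option S))
    (M : Finset I) (P' : I → List (Option S)) : Prop :=
  (∀ i, ValidPref (P' i)) ∧ (∀ i ∉ M, P' i = P i) ∧
    ∀ i ∈ M, ∀ Q : List (Option S), ValidPref Q →
      ¬ prefLt (P i) (φ (Function.update P' i Q) i) (φ P' i)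

/-! ### Semi-sophisticated students -/

/-- Student `i` is guaranteed her first choice `s`: `s` is her most-preferred acceptable
school and `i` is among the `q s` highest-priority students at `s`. -/
def GuaranteedFirstChoice (P : I → List (Option S)) (prio : S → List I) (q : S → ℕ)
    (i : I) (s : S) : Prop :=
  (acceptables (P i)).head? = some s ∧ (prio s).idxOf i < q s

instance (P : I → List (Option S)) (prio : S → List I) (q : S → ℕ) (i : I) (s : S) :
    Decidable (GuaranteedFirstChoice P prio q i s) :=
  inferInstanceAs (Decidable (_ ∧ _))

/-- School `s` is competitive: at least `q s` students are guaranteed their first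
choice `s`. -/
def Competitive (P : I → List (Option S)) (prio : S → List I) (q : S → ℕ) (s : S) : Prop :=
  q s ≤ (Finset.univ.filter (fun i => GuaranteedFirstChoice P prio q i s)).card

instance (P : I → List (Option S)) (prio : S → List I) (q : S → ℕ) (s : S) :
    Decidable (Competitive P prio q s) :=
  inferInstanceAs (Decidable (_ ≤ _))

/-- `P'` is a Nash equilibrium of the game `(GS^ℓ, P)` with semi-sophisticated students:
every student guaranteed her first choice reports truthfully; every other student reports
truthfully if she has at most `ℓ` acceptable schools or all her acceptable schools are
competitive, and otherwise lists as acceptable, in the order given by her true preference,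
only her acceptable schools that are not competitive. -/
def SemiSophProfile (ℓ : ℕ) (P : I → List (Option S)) (prio : S → List I) (q : S → ℕ)
    (P' : I → List (Option S)) : Prop :=
  ∀ i : I,
    ((∃ s : S, GuaranteedFirstChoice P prio q i s) → P' i = P i) ∧
    (¬ (∃ s : S, GuaranteedFirstChoice P prio q i s) →
      (((acceptables (P i)).length ≤ ℓ ∨ ∀ s ∈ acceptables (P i), Competitive P prio q s) →
          P' i = P i) ∧
      (¬ ((acceptables (P i)).length ≤ ℓ ∨
            ∀ s ∈ acceptables (P i), Competitive P prio q s) →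
          acceptables (P' i) =
            (acceptables (P i)).filter (fun s => decide (¬ Competitive P prio q s))))




section Aux

/-- In a list strictly increasing under `f`, positions before the position of `a` have
smaller `f`-value. -/
theorem take_all_lt_of_mem {α : Type*} (f : α → ℕ) {l : List α}
    (hl : l.Pairwise (fun a b => f a < f b)) {q : ℕ} {a : α}
    (ha : a ∈ l) (hna : a ∉ l.take q) :
    (l.take q).length = q ∧ ∀ x ∈ l.take q, f x < f a := by
  obtain ⟨n, hn, rfl⟩ := List.mem_iff_getElem.1 ha
  have hqn : q ≤ n := by
    by_contra h
    push_neg at h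
    exact hna (List.mem_iff_getElem.2 ⟨n, by simp [List.length_take]; omega, by simp⟩)
  constructor
  · simp [List.length_take]; omega
  · intro x hx
    obtain ⟨m, hm, rfl⟩ := List.mem_iff_getElem.1 hx
    have hml : m < l.length := by
      have := hm; simp [List.length_take] at this; omega
    have : (l.take q)[m] = l[m] := List.getElem_take
    rw [this]
    exact List.pairwise_iff_getElem.1 hl m n hml hn (by
      have := hm; simp [List.length_take] at this; omega)

/-- If a strictly `f`-increasing list contains at least `q` elements with `f`-value
below `c`, then all of its first `q` elements have `f`-value below `c`. -/
theorem take_all_lt {α : Type*} (f : α → ℕ) (c : ℕ) {l : List α}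
    (hl : l.Pairwise (fun a b => f a < f b)) {q : ℕ}
    (hq : q ≤ (l.filter (fun x => decide (f x < c))).length) :
    (l.take q).length = q ∧ ∀ x ∈ l.take q, f x < c := by
  have hlen : q ≤ l.length := le_trans hq (l.filter_sublist.length_le)
  refine ⟨by simp [List.length_take]; omega, ?_⟩
  intro x hx
  obtain ⟨m, hm, rfl⟩ := List.mem_iff_getElem.1 hx
  have hmq : m < q := by have := hm; simp [List.length_take] at this; omega
  have hml : m < l.length := lt_of_lt_of_le hmq hlen
  rw [List.getElem_take]
  by_contra hc
  push_neg at hc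
  -- every element of `l.drop m` has `f`-value ≥ c
  have hdrop : ∀ x ∈ l.drop m, ¬ (f x < c) := by
    intro x hxm
    obtain ⟨j, hj, rfl⟩ := List.mem_iff_getElem.1 hxm
    have hjl : m + j < l.length := by simp at hj; omega
    have : (l.drop m)[j] = l[m + j] := List.getElem_drop
    rw [this]
    rcases Nat.eq_zero_or_pos j with hj0 | hj0
    · subst hj0; simpa using hc
    · have := List.pairwise_iff_getElem.1 hl m (m + j) hml hjl (by omega)
      omega
  have : l.filter (fun x => decide (f x < c)) = (l.take m).filter (fun x => decide (f x < c)) := by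
    conv_lhs => rw [← List.take_append_drop m l]
    rw [List.filter_append]
    have : (l.drop m).filter (fun x => decide (f x < c)) = [] := by
      rw [List.filter_eq_nil_iff]
      intro x hxm hfc
      exact hdrop x hxm (by simpa using hfc)
    simp [this]
  rw [this] at hq
  have : ((l.take m).filter (fun x => decide (f x < c))).length ≤ m := by
    refine le_trans (List.length_filter_le _ _) (by simp)
  omega

/-- Discrete intermediate value: a ℕ-valued trajectory moving by steps of ≤ 1 hits
every intermediate value and steps up from it. -/
theorem discrete_ivt (g : ℕ → ℕ) (h0 : g 0 = 0)
    (hstep : ∀ t, g (t + 1) = g t ∨ g (t + 1) = g t + 1) {m : ℕ} :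
    ∀ T, m < g T → ∃ t < T, g t = m ∧ g (t + 1) = m + 1 := by
  intro T
  induction T with
  | zero => intro h; omega
  | succ T ih =>
    intro h
    by_cases hm : m < g T
    · obtain ⟨t, ht, h1, h2⟩ := ih hm
      exact ⟨t, by omega, h1, h2⟩
    · push_neg at hm
      rcases hstep T with h1 | h1 <;> [omega; skip]
      refine ⟨T, by omega, by omega, by omega⟩

/-- `find?` characterization by position. -/
theorem find?_eq_some_of {α : Type*} {p : α → Bool} :
    ∀ {l : List α} {n : ℕ} (hn : n < l.length),
      p l[n] = true → (∀ m (hm : m < n), p (l[m]'(by omega)) = false) →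
      l.find? p = some l[n]
  | [], n, hn, _, _ => by simp at hn
  | a :: l, 0, hn, hp, _ => by simp only [List.getElem_cons_zero] at hp ⊢; simp [List.find?_cons, hp]
  | a :: l, n + 1, hn, hp, hbefore => by
    have ha : p a = false := by
      have := hbefore 0 (by omega)
      simpa using this
    have : (a :: l).find? p = l.find? p := by simp [List.find?, ha]
    rw [this]
    have hn' : n < l.length := by simpa using hn
    have := find?_eq_some_of (p := p) hn' (by simpa using hp)
      (fun m hm => by
        have := hbefore (m + 1) (by omega)
        simpa using this)
    simpa using this

/-- `indexOf` within a `take` agrees with `indexOf` in the list. -/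
theorem indexOf_take {α : Type*} [DecidableEq α] :
    ∀ (l : List α) (k : ℕ) (x : α), x ∈ l.take k → (l.take k).idxOf x = l.idxOf x
  | [], k, x, hx => by simp at hx
  | a :: l, 0, x, hx => by simp at hx
  | a :: l, k + 1, x, hx => by
    by_cases h : x = a
    · subst h; simp [List.idxOf_cons_self]
    · simp only [List.take_succ_cons] at hx ⊢
      rw [List.idxOf_cons_ne _ (fun hax => h hax.symm), List.idxOf_cons_ne _ (fun hax => h hax.symm),
        indexOf_take l k x (by rcases List.mem_cons.1 hx with h' | h'; exact absurd h' h; exact h')]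

theorem pairwise_indexOf {α : Type*} [DecidableEq α] {l : List α} (h : l.Nodup) :
    l.Pairwise (fun a b => l.idxOf a < l.idxOf b) := by
  rw [List.pairwise_iff_getElem]
  intro i j hi hj hij
  rw [h.idxOf_getElem i hi, h.idxOf_getElem j hj]
  exact hij


theorem lawfulBEq_unique {α : Type*} (i1 i2 : BEq α) (h1 : @LawfulBEq α i1) (h2 : @LawfulBEq α i2) :
    i1 = i2 := by
  cases i1 with | mk f =>
  cases i2 with | mk g =>
  congr
  funext a b
  have e1 := @beq_iff_eq α ⟨f⟩ h1 a b
  have e2 := @beq_iff_eq α ⟨g⟩ h2 a b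
  simp only [show (⟨f⟩ : BEq α).beq = f from rfl] at e1
  simp only [show (⟨g⟩ : BEq α).beq = g from rfl] at e2
  by_cases h : a = b
  · subst h; simp [e1.2 rfl, e2.2 rfl]
  · have g1 : f a b = false := by
      by_contra hc
      exact h (e1.1 (Bool.ne_false_iff.1 hc))
    have g2 : g a b = false := by
      by_contra hc
      exact h (e2.1 (Bool.ne_false_iff.1 hc))
    rw [g1, g2]

theorem optBEq_eq {S : Type*} [DecidableEq S] :
    (instBEqOfDecidableEq : BEq (Option S)) = Option.instBEq :=
  lawfulBEq_unique _ _ inferInstance inferInstance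

theorem filterMap_id_map_some (l : List S) : (l.map some).filterMap id = l := by
  induction l with
  | nil => rfl
  | cons a l ih => simp [List.filterMap_cons, ih]

theorem map_some_of_all_isSome : ∀ {A : List (Option S)}, (∀ x ∈ A, x.isSome) →
    (A.filterMap id).map some = A
  | [], _ => rfl
  | a :: A, h => by
    obtain ⟨b, rfl⟩ := Option.isSome_iff_exists.1 (h a (List.mem_cons_self))
    simp only [List.filterMap_cons, id]
    simp only [List.map_cons]
    exact congrArg (some b :: ·) (map_some_of_all_isSome (fun x hx => h x (List.mem_cons_of_mem _ hx)))

theorem takeWhile_append_all {α : Type*} {pred : α → Bool} :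
    ∀ {l₁ : List α} {a : α} {l₂ : List α}, (∀ x ∈ l₁, pred x = true) → pred a = false →
      List.takeWhile pred (l₁ ++ a :: l₂) = l₁
  | [], a, l₂, _, h2 => by simp [List.takeWhile_cons, h2]
  | b :: l₁, a, l₂, h1, h2 => by
    have hb : pred b = true := h1 b (List.mem_cons_self)
    simp only [List.cons_append, List.takeWhile_cons, hb, if_true]
    rw [takeWhile_append_all (fun x hx => h1 x (List.mem_cons_of_mem _ hx)) h2]

theorem acceptables_of_decomp {p : List (Option S)} {M : List S} {t : List (Option S)}
    (hp : p = M.map some ++ none :: t) : acceptables p = M := by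
  subst hp
  unfold acceptables
  rw [takeWhile_append_all (fun x hx => by obtain ⟨s, _, rfl⟩ := List.mem_map.1 hx; rfl) rfl]
  exact filterMap_id_map_some M

theorem acceptables_truncate (p : List (Option S)) (k : ℕ) :
    acceptables (truncate p k) = (acceptables p).take k :=
  acceptables_of_decomp rfl

theorem acceptables_cons_some (s : S) (l : List (Option S)) :
    acceptables (some s :: l) = s :: acceptables l := by
  simp [acceptables, List.takeWhile_cons, List.filterMap_cons]

/-- Decomposition of a valid preference list. -/
theorem validPref_decomp {p : List (Option S)} (hp : ValidPref p) :
    ∃ t : List (Option S), p = (acceptables p).map some ++ none :: t := by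
  have hsplit := (List.takeWhile_append_dropWhile (p := Option.isSome) (l := p))
  have hmap : (acceptables p).map some = p.takeWhile Option.isSome :=
    map_some_of_all_isSome (fun x hx => List.mem_takeWhile_imp hx)
  have hnonem : p.dropWhile Option.isSome ≠ [] := by
    intro h
    have : (none : Option S) ∈ p := hp.2 none
    rw [← hsplit, h, List.append_nil] at this
    have := List.mem_takeWhile_imp this
    simp at this
  have hhead : (p.dropWhile Option.isSome).head hnonem = none := by
    have := List.head_dropWhile_not Option.isSome hnonem
    simpa using this
  refine ⟨(p.dropWhile Option.isSome).tail, ?_⟩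
  rw [hmap]
  conv_lhs => rw [← hsplit]
  congr 1
  rw [← hhead, List.cons_head_tail]

theorem indexOf_map_some (l : List S) (s : S) :
    (l.map some).idxOf (some s) = l.idxOf s := by
  induction l with
  | nil => rfl
  | cons a l ih =>
    by_cases h : s = a
    · subst h
      simp only [List.map_cons, ← optBEq_eq]
      rw [List.idxOf_cons_self, List.idxOf_cons_self]
    · simp only [List.map_cons, ← optBEq_eq] at ih ⊢
      rw [List.idxOf_cons_ne _ (fun hc : (some a : Option S) = some s =>
          h (Option.some_injective _ hc.symm)),
        List.idxOf_cons_ne _ (fun hc : a = s => h hc.symm), ih]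

theorem indexOf_none_eq {p : List (Option S)} (hp : ValidPref p) :
    p.idxOf none = (acceptables p).length := by
  obtain ⟨t, hdec⟩ := validPref_decomp hp
  conv_lhs => rw [hdec]
  rw [List.idxOf_append_of_notMem (by simp), List.idxOf_cons_self]
  simp

theorem indexOf_of_acc {p : List (Option S)} {s : S} (hp : ValidPref p)
    (hs : s ∈ acceptables p) : p.idxOf (some s) = (acceptables p).idxOf s := by
  obtain ⟨t, hdec⟩ := validPref_decomp hp
  conv_lhs => rw [hdec]
  have := indexOf_map_some (acceptables p) s
  rw [List.idxOf_append_of_mem (List.mem_map_of_mem (f := some) hs)]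
  exact this

theorem prefLt_none_iff_acc {p : List (Option S)} {s : S} (hp : ValidPref p) :
    prefLt p (some s) none ↔ s ∈ acceptables p := by
  constructor
  · intro h
    by_contra hs
    obtain ⟨t, hdec⟩ := validPref_decomp hp
    unfold prefLt at h
    rw [indexOf_none_eq hp] at h
    have hnm : (some s : Option S) ∉ (acceptables p).map some := by
      intro hc
      obtain ⟨u, hu, he⟩ := List.mem_map.1 hc
      exact hs ((Option.some_injective _ he) ▸ hu)
    conv at h => lhs; rw [hdec]
    rw [List.idxOf_append_of_notMem hnm,
      List.idxOf_cons_ne _ (show (none : Option S) ≠ some s by simp)] at h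
    simp at h
  · intro hs
    unfold prefLt
    rw [indexOf_none_eq hp, indexOf_of_acc hp hs]
    exact List.idxOf_lt_length_iff.2 hs

theorem prefLt_iff_accIndex {p : List (Option S)} {a b : S} (hp : ValidPref p)
    (ha : a ∈ acceptables p) (hb : b ∈ acceptables p) :
    prefLt p (some a) (some b) ↔
      (acceptables p).idxOf a < (acceptables p).idxOf b := by
  unfold prefLt
  rw [indexOf_of_acc hp ha, indexOf_of_acc hp hb]

theorem acc_nodup {p : List (Option S)} (hnd : p.Nodup) : (acceptables p).Nodup := by
  unfold acceptables
  exact List.Nodup.filterMap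
    (fun a a' b hb hb' => by
      simp only [id] at hb hb'
      rw [Option.mem_def] at hb hb'; rw [hb, hb'])
    ((p.takeWhile_sublist _).nodup hnd)


/-- The number of higher-priority students assigned to `s` by `μ`. -/
def availCount (pr : List I) (μ : I → Option S) (i : I) (s : S) : ℕ :=
  (Finset.univ.filter (fun j => pr.idxOf j < pr.idxOf i ∧ μ j = some s)).card

section DA

variable (R : I → List (Option S)) (prio : S → List I) (q : S → ℕ)

/-- One step moves each coordinate up by 0 or 1. -/
theorem daStep_eq_or (σ : I → ℕ) (i : I) :
    daStep R prio q σ i = σ i ∨ daStep R prio q σ i = σ i + 1 := by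
  unfold daStep
  cases daTarget R σ i with
  | none => exact Or.inl rfl
  | some s => by_cases h : i ∈ daHeld R prio q σ s <;> simp [h]

/-- The state never exceeds the length of the acceptables list. -/
theorem daStep_le_len (σ : I → ℕ) (h : ∀ i, σ i ≤ (acceptables (R i)).length) :
    ∀ i, daStep R prio q σ i ≤ (acceptables (R i)).length := by
  intro i
  unfold daStep
  cases hT : daTarget R σ i with
  | none => exact h i
  | some s =>
    have hlt : σ i < (acceptables (R i)).length := by
      by_contra hc
      push_neg at hc
      rw [daTarget, List.getElem?_eq_none_iff.2 hc] at hT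
      cases hT
    by_cases hh : i ∈ daHeld R prio q σ s <;> simp [hh] <;> omega

theorem iterate_le_len (t : ℕ) :
    ∀ i, (daStep R prio q)^[t] (fun _ => 0) i ≤ (acceptables (R i)).length := by
  induction t with
  | zero => intro i; simp
  | succ t ih =>
    rw [Function.iterate_succ_apply']
    exact daStep_le_len R prio q _ ih

/-- Generic fixed-point lemma for progressive bounded iteration. -/
theorem iterate_fixed {β : Type*} (f : β → β) (m : β → ℕ) (x0 : β) (N : ℕ)
    (hm : ∀ t, m (f^[t] x0) ≤ N) (hprog : ∀ x, f x = x ∨ m x < m (f x)) :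
    f (f^[N + 1] x0) = f^[N + 1] x0 := by
  have key : ∃ t ≤ N, f (f^[t] x0) = f^[t] x0 := by
    by_contra hc
    push_neg at hc
    have grow : ∀ t ≤ N + 1, t ≤ m (f^[t] x0) := by
      intro t
      induction t with
      | zero => omega
      | succ t ih =>
        intro ht
        have h1 := ih (by omega)
        have h2 := hprog (f^[t] x0)
        rcases h2 with h2 | h2
        · exact absurd h2 (hc t (by omega))
        · rw [Function.iterate_succ_apply'] at *
          omega
    have := grow (N + 1) le_rfl
    have := hm (N + 1)
    omega
  obtain ⟨t, ht, hfix⟩ := key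
  have stable : ∀ u, f^[t + u] x0 = f^[t] x0 := by
    intro u
    induction u with
    | zero => rfl
    | succ u ih =>
      have : t + (u + 1) = (t + u) + 1 := by omega
      rw [this, Function.iterate_succ_apply', ih, hfix]
  have hN : N + 1 = t + (N + 1 - t) := by omega
  rw [hN, stable]
  exact hfix

end DA



section DAcore

variable (R : I → List (Option S)) (prio : S → List I) (q : S → ℕ) (pr : List I)

/-- The terminal state of the deferred-acceptance iteration. -/
def sigmaStar : I → ℕ :=
  (daStep R prio q)^[Fintype.card I * Fintype.card S + 1] (fun _ => 0)

theorem GS_def (i : I) :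
    GS R prio q i =
      match daTarget R (sigmaStar R prio q) i with
      | none => none
      | some s => if i ∈ daHeld R prio q (sigmaStar R prio q) s then some s else none := rfl

theorem sigmaStar_fixed (hlen : ∀ i, (acceptables (R i)).length ≤ Fintype.card S) :
    daStep R prio q (sigmaStar R prio q) = sigmaStar R prio q := by
  apply iterate_fixed (daStep R prio q) (fun σ => ∑ i, σ i) _
    (Fintype.card I * Fintype.card S)
  · intro t
    calc ∑ i, (daStep R prio q)^[t] (fun _ => 0) i
        ≤ ∑ i, (acceptables (R i)).length :=
          Finset.sum_le_sum (fun i _ => iterate_le_len R prio q t i)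
      _ ≤ Finset.univ.card • Fintype.card S :=
          Finset.sum_le_card_nsmul _ _ _ (fun i _ => hlen i)
      _ = Fintype.card I * Fintype.card S := by simp [Finset.card_univ, mul_comm]
  · intro σ
    by_cases h : daStep R prio q σ = σ
    · exact Or.inl h
    · right
      obtain ⟨i, hi⟩ := Function.ne_iff.1 h
      refine Finset.sum_lt_sum (fun j _ => ?_) ⟨i, Finset.mem_univ i, ?_⟩
      · rcases daStep_eq_or R prio q σ j with h' | h' <;> omega
      · rcases daStep_eq_or R prio q σ i with h' | h' <;> omega

theorem fixed_held {σ : I → ℕ} (hfix : daStep R prio q σ = σ) {i : I} {s : S}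
    (hT : daTarget R σ i = some s) : i ∈ daHeld R prio q σ s := by
  by_contra h
  have := congrFun hfix i
  unfold daStep at this
  rw [hT] at this
  simp [h] at this

theorem gs_eq_target (hlen : ∀ i, (acceptables (R i)).length ≤ Fintype.card S) (i : I) :
    GS R prio q i = daTarget R (sigmaStar R prio q) i := by
  rw [GS_def]
  cases hT : daTarget R (sigmaStar R prio q) i with
  | none => rfl
  | some s => simp [fixed_held R prio q (sigmaStar_fixed R prio q hlen) hT]

theorem length_filter_eq_card (hpr : ValidPrio pr) (P : I → Prop) [DecidablePred P] :
    (pr.filter (fun i => decide (P i))).length = (Finset.univ.filter P).card := by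
  rw [← List.toFinset_card_of_nodup (hpr.1.filter _)]
  congr 1
  ext j
  simp [List.mem_filter, hpr.2 j]

/-- Once a school has `q s` applicants above `i`, this persists through a DA round. -/
theorem rej_step (hpr : ValidPrio pr) (hc : ∀ s, prio s = pr) {σ : I → ℕ} {i : I} {s : S}
    (h : q s ≤ (Finset.univ.filter
        (fun j => daTarget R σ j = some s ∧ pr.idxOf j < pr.idxOf i)).card) :
    q s ≤ (Finset.univ.filter
        (fun j => daTarget R (daStep R prio q σ) j = some s ∧
          pr.idxOf j < pr.idxOf i)).card := by
  set A := pr.filter (fun j => decide (daTarget R σ j = some s)) with hA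
  have hAnd : (A.filter (fun j => decide (pr.idxOf j < pr.idxOf i))).length =
      (Finset.univ.filter
        (fun j => daTarget R σ j = some s ∧ pr.idxOf j < pr.idxOf i)).card := by
    rw [hA, List.filter_filter, ← length_filter_eq_card pr hpr
      (fun j => daTarget R σ j = some s ∧ pr.idxOf j < pr.idxOf i)]
    congr 1
    apply List.filter_congr
    intro a _
    rw [Bool.decide_and, Bool.and_comm]
  have hq' : q s ≤ (A.filter (fun j => decide (pr.idxOf j < pr.idxOf i))).length := by
    omega
  have hpair : A.Pairwise (fun a b => pr.idxOf a < pr.idxOf b) :=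
    (pairwise_indexOf hpr.1).sublist List.filter_sublist
  obtain ⟨hlenTake, hall⟩ :=
    take_all_lt (fun j => pr.idxOf j) (pr.idxOf i) hpair hq'
  have hheld : daHeld R prio q σ s = A.take (q s) := by
    unfold daHeld
    rw [hc s]
  have hsub : (A.take (q s)).toFinset ⊆ Finset.univ.filter
      (fun j => daTarget R (daStep R prio q σ) j = some s ∧
        pr.idxOf j < pr.idxOf i) := by
    intro j hj
    rw [List.mem_toFinset] at hj
    have hjA : j ∈ A := List.take_subset _ _ hj
    have hjT : daTarget R σ j = some s := by
      have := List.of_mem_filter hjA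
      simpa using this
    have hjheld : j ∈ daHeld R prio q σ s := by rw [hheld]; exact hj
    have hstepj : daStep R prio q σ j = σ j := by
      unfold daStep
      rw [hjT]
      simp [hjheld]
    refine Finset.mem_filter.2 ⟨Finset.mem_univ j, ?_, hall j hj⟩
    unfold daTarget at hjT ⊢
    rw [hstepj]
    exact hjT
  calc q s = (A.take (q s)).length := hlenTake.symm
    _ = (A.take (q s)).toFinset.card :=
        (List.toFinset_card_of_nodup (((A.take_sublist (q s))).nodup
          (hpr.1.filter _))).symm
    _ ≤ _ := Finset.card_le_card hsub

/-- A rejected applicant faces `q s` higher-priority applicants. -/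
theorem rej_start (hpr : ValidPrio pr) (hc : ∀ s, prio s = pr) {σ : I → ℕ} {i : I} {s : S}
    (hT : daTarget R σ i = some s) (hnh : i ∉ daHeld R prio q σ s) :
    q s ≤ (Finset.univ.filter
        (fun j => daTarget R σ j = some s ∧ pr.idxOf j < pr.idxOf i)).card := by
  set A := pr.filter (fun j => decide (daTarget R σ j = some s)) with hA
  have hiA : i ∈ A := List.mem_filter.2 ⟨hpr.2 i, by simp [hT]⟩
  have hheld : daHeld R prio q σ s = A.take (q s) := by
    unfold daHeld
    rw [hc s]
  rw [hheld] at hnh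
  have hpair : A.Pairwise (fun a b => pr.idxOf a < pr.idxOf b) :=
    (pairwise_indexOf hpr.1).sublist List.filter_sublist
  obtain ⟨hlenTake, hall⟩ :=
    take_all_lt_of_mem (fun j => pr.idxOf j) hpair hiA hnh
  have hsub : (A.take (q s)).toFinset ⊆ Finset.univ.filter
      (fun j => daTarget R σ j = some s ∧ pr.idxOf j < pr.idxOf i) := by
    intro j hj
    rw [List.mem_toFinset] at hj
    have hjA : j ∈ A := List.take_subset _ _ hj
    have hjT : daTarget R σ j = some s := by
      have := List.of_mem_filter hjA
      simpa using this
    exact Finset.mem_filter.2 ⟨Finset.mem_univ j, hjT, hall j hj⟩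
  calc q s = (A.take (q s)).length := hlenTake.symm
    _ = (A.take (q s)).toFinset.card :=
        (List.toFinset_card_of_nodup (((A.take_sublist (q s))).nodup
          (hpr.1.filter _))).symm
    _ ≤ _ := Finset.card_le_card hsub

/-- If the terminal state has passed position `m` of `i`'s list, the `m`-th school is
full with higher-priority students at the end. -/
theorem rejected_final (hpr : ValidPrio pr) (hc : ∀ s, prio s = pr) {i : I} {m : ℕ}
    (hm : m < sigmaStar R prio q i) (hmlen : m < (acceptables (R i)).length) :
    q ((acceptables (R i))[m]) ≤ (Finset.univ.filter
      (fun j => daTarget R (sigmaStar R prio q) j = some ((acceptables (R i))[m]) ∧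
        pr.idxOf j < pr.idxOf i)).card := by
  set T := Fintype.card I * Fintype.card S + 1 with hTdef
  set s := (acceptables (R i))[m] with hs
  set f := daStep R prio q with hf
  have hstep : ∀ t, f^[t + 1] (fun _ => 0) i = f^[t] (fun _ => 0) i ∨
      f^[t + 1] (fun _ => 0) i = f^[t] (fun _ => 0) i + 1 := by
    intro t
    rw [Function.iterate_succ_apply']
    exact daStep_eq_or R prio q _ i
  obtain ⟨t, htT, h1, h2⟩ := discrete_ivt (fun t => f^[t] (fun _ => 0) i) (by simp)
    hstep T hm
  have hy : f^[t + 1] (fun _ => 0) = f (f^[t] (fun _ => 0)) :=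
    Function.iterate_succ_apply' f t _
  set σt := f^[t] (fun _ => 0) with hσt
  have h1' : σt i = m := h1
  have h2' : f^[t + 1] (fun _ => 0) i = m + 1 := h2
  have hTt : daTarget R σt i = some s := by
    have hm' : σt i = m := h1'
    simp only [daTarget, hm']
    exact List.getElem?_eq_getElem hmlen
  have hrej : i ∉ daHeld R prio q σt s := by
    intro hmem
    have hthis := congrFun hy i
    rw [h2'] at hthis
    unfold f at hthis
    unfold daStep at hthis
    rw [hTt] at hthis
    simp only [hmem, if_true, h1'] at hthis
    omega
  have hbase := rej_start R prio q pr hpr hc hTt hrej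
  have hprop : ∀ d, q s ≤ (Finset.univ.filter
      (fun j => daTarget R (f^[d] σt) j = some s ∧ pr.idxOf j < pr.idxOf i)).card := by
    intro d
    induction d with
    | zero => exact hbase
    | succ d ih =>
      rw [Function.iterate_succ_apply']
      exact rej_step R prio q pr hpr hc ih
  have hσs : sigmaStar R prio q = f^[T - t] σt := by
    rw [hσt, ← Function.iterate_add_apply]
    have : T - t + t = T := by omega
    rw [this]
    rfl
  rw [hσs]
  exact hprop (T - t)

/-- At the terminal state, each school holds at most `q s` students. -/
theorem card_matched_le (hpr : ValidPrio pr) (hc : ∀ s, prio s = pr)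
    (hlen : ∀ i, (acceptables (R i)).length ≤ Fintype.card S) (s : S) :
    (Finset.univ.filter (fun j => GS R prio q j = some s)).card ≤ q s := by
  have hfix := sigmaStar_fixed R prio q hlen
  have hset : Finset.univ.filter (fun j => GS R prio q j = some s) =
      Finset.univ.filter (fun j => daTarget R (sigmaStar R prio q) j = some s) := by
    apply Finset.filter_congr
    intro j _
    rw [gs_eq_target R prio q hlen j]
  rw [hset, ← length_filter_eq_card pr hpr]
  set A := pr.filter (fun j => decide (daTarget R (sigmaStar R prio q) j = some s)) with hA
  have hAq : A ⊆ A.take (q s) := by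
    intro j hj
    have hjT : daTarget R (sigmaStar R prio q) j = some s := by
      have := List.of_mem_filter hj
      simpa using this
    have := fixed_held R prio q hfix hjT
    unfold daHeld at this
    rw [hc s] at this
    exact this
  have hnd : A.Nodup := hpr.1.filter _
  calc A.length = A.toFinset.card := (List.toFinset_card_of_nodup hnd).symm
    _ ≤ (A.take (q s)).toFinset.card := Finset.card_le_card (by
        intro j hj
        rw [List.mem_toFinset] at hj ⊢
        exact hAq hj)
    _ ≤ (A.take (q s)).length := (A.take (q s)).toFinset_card_le
    _ ≤ q s := by simp [List.length_take]

end DAcore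


section Char

variable (R : I → List (Option S)) (prio : S → List I) (q : S → ℕ) (pr : List I)

/-- The serial-dictatorship characterization of the Gale–Shapley outcome under a
common priority order: each student gets her first listed school that is not yet
filled by higher-priority students. -/
theorem gs_char (hpr : ValidPrio pr) (hc : ∀ s, prio s = pr)
    (hnd : ∀ j, (acceptables (R j)).Nodup) (i : I) :
    GS R prio q i = (acceptables (R i)).find?
      (fun s => decide (availCount pr (GS R prio q) i s < q s)) := by
  have hlen : ∀ j, (acceptables (R j)).length ≤ Fintype.card S :=
    fun j => (hnd j).length_le_card
  have hfix := sigmaStar_fixed R prio q hlen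
  have hinv : sigmaStar R prio q i ≤ (acceptables (R i)).length :=
    iterate_le_len R prio q _ i
  -- rejected schools are unavailable
  have hrej : ∀ m (hm : m < sigmaStar R prio q i) (hmlen : m < (acceptables (R i)).length),
      q ((acceptables (R i))[m]) ≤ availCount pr (GS R prio q) i ((acceptables (R i))[m]) := by
    intro m hm hmlen
    have := rejected_final R prio q pr hpr hc hm hmlen
    unfold availCount
    have hset : (Finset.univ.filter
        (fun j => daTarget R (sigmaStar R prio q) j = some ((acceptables (R i))[m]) ∧
          pr.idxOf j < pr.idxOf i)) =
        (Finset.univ.filter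
        (fun j => pr.idxOf j < pr.idxOf i ∧
          GS R prio q j = some ((acceptables (R i))[m]))) := by
      apply Finset.filter_congr
      intro j _
      rw [gs_eq_target R prio q hlen j, and_comm]
    rw [← hset]
    exact this
  rw [GS_def]
  cases hT : daTarget R (sigmaStar R prio q) i with
  | none =>
    have hge : (acceptables (R i)).length ≤ sigmaStar R prio q i := by
      unfold daTarget at hT
      exact List.getElem?_eq_none_iff.1 hT
    simp only
    symm
    rw [List.find?_eq_none]
    intro x hx
    obtain ⟨m, hmlen, rfl⟩ := List.mem_iff_getElem.1 hx
    have := hrej m (by omega) hmlen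
    simp only [decide_eq_true_eq]
    omega
  | some s =>
    obtain ⟨hlt, hget⟩ := List.getElem?_eq_some_iff.1 hT
    have hheld := fixed_held R prio q hfix hT
    simp only [hheld, if_true]
    have hμi : GS R prio q i = some s := by
      rw [GS_def, hT]
      simp [hheld]
    have havail : availCount pr (GS R prio q) i s < q s := by
      have hcap := card_matched_le R prio q pr hpr hc hlen s
      have hsub : (Finset.univ.filter
          (fun j => pr.idxOf j < pr.idxOf i ∧ GS R prio q j = some s)) ⊂
          (Finset.univ.filter (fun j => GS R prio q j = some s)) := by
        rw [Finset.ssubset_iff_subset_ne]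
        constructor
        · intro j hj
          rw [Finset.mem_filter] at hj ⊢
          exact ⟨hj.1, hj.2.2⟩
        · intro he
          have hi1 : i ∈ Finset.univ.filter (fun j => GS R prio q j = some s) :=
            Finset.mem_filter.2 ⟨Finset.mem_univ i, hμi⟩
          rw [← he, Finset.mem_filter] at hi1
          exact lt_irrefl _ hi1.2.1
      have := Finset.card_lt_card hsub
      unfold availCount
      omega
    symm
    have := find?_eq_some_of (p := fun s => decide (availCount pr (GS R prio q) i s < q s))
      (l := acceptables (R i)) (n := sigmaStar R prio q i) hlt
      (by rw [hget]; simpa using havail)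
      (fun m hm => by
        have := hrej m hm (by omega)
        simp only [decide_eq_false_iff_not]
        omega)
    rw [hget] at this
    exact this

/-- Any two outcomes satisfying the characterization for profiles that agree above `i`
coincide above `i`. -/
theorem char_agree (hpr : ValidPrio pr) {Rm Rn : I → List (Option S)} {μ ν : I → Option S}
    (hμ : ∀ j, μ j = (acceptables (Rm j)).find? (fun s => decide (availCount pr μ j s < q s)))
    (hν : ∀ j, ν j = (acceptables (Rn j)).find? (fun s => decide (availCount pr ν j s < q s)))
    (i : I) (hagree : ∀ j, pr.idxOf j < pr.idxOf i → Rm j = Rn j) :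
    ∀ j, pr.idxOf j < pr.idxOf i → μ j = ν j := by
  have main : ∀ n j, pr.idxOf j = n → pr.idxOf j < pr.idxOf i → μ j = ν j := by
    intro n
    induction n using Nat.strong_induction_on with
    | _ n ih =>
      intro j hn hj
      have hcnt : ∀ s, availCount pr μ j s = availCount pr ν j s := by
        intro s
        unfold availCount
        congr 1
        apply Finset.filter_congr
        intro j' _
        have hij' : pr.idxOf j' < pr.idxOf j → μ j' = ν j' := fun hlt =>
          ih (pr.idxOf j') (hn ▸ hlt) j' rfl (lt_trans hlt hj)
        constructor
        · rintro ⟨h1, h2⟩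
          exact ⟨h1, (hij' h1) ▸ h2⟩
        · rintro ⟨h1, h2⟩
          exact ⟨h1, (hij' h1) ▸ h2⟩
      rw [hμ j, hν j, hagree j hj]
      congr 1
      funext s
      rw [hcnt s]
  exact fun j => main (pr.idxOf j) j rfl

theorem char_agree_count (hpr : ValidPrio pr) {Rm Rn : I → List (Option S)}
    {μ ν : I → Option S}
    (hμ : ∀ j, μ j = (acceptables (Rm j)).find? (fun s => decide (availCount pr μ j s < q s)))
    (hν : ∀ j, ν j = (acceptables (Rn j)).find? (fun s => decide (availCount pr ν j s < q s)))
    (i : I) (hagree : ∀ j, pr.idxOf j < pr.idxOf i → Rm j = Rn j) (s : S) :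
    availCount pr μ i s = availCount pr ν i s := by
  have heq := char_agree q pr hpr hμ hν i hagree
  unfold availCount
  congr 1
  apply Finset.filter_congr
  intro j' _
  constructor
  · rintro ⟨h1, h2⟩
    exact ⟨h1, (heq j' h1) ▸ h2⟩
  · rintro ⟨h1, h2⟩
    exact ⟨h1, (heq j' h1) ▸ h2⟩

end Char


section MoreHelpers

theorem find?_first {α : Type*} [DecidableEq α] {p : α → Bool} :
    ∀ {L : List α} {b : α}, L.find? p = some b → ∀ a ∈ L, p a = true →
      L.idxOf b ≤ L.idxOf a
  | [], b, h => by simp at h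
  | c :: L, b, h => by
    intro a ha hpa
    by_cases hpc : p c = true
    · rw [List.find?_cons_of_pos hpc] at h
      have : b = c := (Option.some_injective _ h).symm
      subst this
      simp [List.idxOf_cons_self]
    · have hpc' : p c = false := by simpa using hpc
      rw [List.find?_cons_of_neg (by simp [hpc'])] at h
      have hbL : b ∈ L := List.mem_of_find?_eq_some h
      have hpb : p b = true := List.find?_some h
      have hbc : b ≠ c := fun he => by rw [he, hpc'] at hpb; exact Bool.noConfusion hpb
      have hac : a ≠ c := fun he => by rw [he, hpc'] at hpa; exact Bool.noConfusion hpa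
      have haL : a ∈ L := by
        rcases List.mem_cons.1 ha with h' | h'
        · exact absurd h' hac
        · exact h'
      rw [List.idxOf_cons_ne _ (fun he => hbc he.symm),
        List.idxOf_cons_ne _ (fun he => hac he.symm)]
      exact Nat.succ_le_succ (find?_first h a haL hpa)

theorem mem_take_of_indexOf_lt {α : Type*} [DecidableEq α] {l : List α} {a : α} {k : ℕ}
    (ha : a ∈ l) (hk : l.idxOf a < k) : a ∈ l.take k := by
  have hlt : l.idxOf a < l.length := List.idxOf_lt_length_iff.2 ha
  refine List.mem_iff_getElem.2 ⟨l.idxOf a, ?_, ?_⟩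
  · simp [List.length_take]; omega
  · rw [List.getElem_take]
    exact List.getElem_idxOf hlt

theorem indexOf_lt_of_mem_take {α : Type*} [DecidableEq α] {l : List α} {a : α} {k : ℕ}
    (ha : a ∈ l.take k) : l.idxOf a < k := by
  have h1 : (l.take k).idxOf a = l.idxOf a := indexOf_take l k a ha
  have h2 : (l.take k).idxOf a < (l.take k).length := List.idxOf_lt_length_iff.2 ha
  have h3 : (l.take k).length ≤ k := by simp [List.length_take]
  omega

end MoreHelpers


section Bridge

/-- If school `s` still has room for `i` (given higher-priority assignments) but `i`
truly prefers `s` to her assignment under the truncated profile, then `i` is unmatched,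
`s` is truly acceptable to her, and `s` was cut off by the truncation. -/
theorem blocked_unmatched (P : I → List (Option S)) (prio : S → List I) (q : S → ℕ)
    (pr : List I) (k : ℕ) (hP : ∀ i, ValidPref (P i)) (hpr : ValidPrio pr)
    (hc : ∀ s, prio s = pr) {i : I} {s : S}
    (hA : availCount pr (GS (fun j => truncate (P j) k) prio q) i s < q s)
    (hlt : prefLt (P i) (some s) (GS (fun j => truncate (P j) k) prio q i)) :
    GS (fun j => truncate (P j) k) prio q i = none ∧ s ∈ acceptables (P i) ∧
      s ∉ acceptables (truncate (P i) k) := by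
  have hndR : ∀ j, (acceptables (truncate (P j) k)).Nodup := fun j => by
    rw [acceptables_truncate]
    exact (List.take_sublist _ _).nodup (acc_nodup (hP j).1)
  have hchar := gs_char (fun j => truncate (P j) k) prio q pr hpr hc hndR
  cases hμi : GS (fun j => truncate (P j) k) prio q i with
  | some s0 =>
    exfalso
    have hfind : (acceptables (truncate (P i) k)).find?
        (fun s => decide (availCount pr (GS (fun j => truncate (P j) k) prio q) i s < q s)) =
          some s0 := by
      rw [← hchar i]
      exact hμi
    have hs0L : s0 ∈ acceptables (truncate (P i) k) := List.mem_of_find?_eq_some hfind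
    have haccR : acceptables (truncate (P i) k) = (acceptables (P i)).take k :=
      acceptables_truncate _ _
    have hs0P : s0 ∈ acceptables (P i) := by
      rw [haccR] at hs0L
      exact List.take_subset _ _ hs0L
    have hlt0 : prefLt (P i) (some s) (some s0) := by
      rw [hμi] at hlt
      exact hlt
    have hs0none : prefLt (P i) (some s0) none := (prefLt_none_iff_acc (hP i)).2 hs0P
    have hsnone : prefLt (P i) (some s) none := lt_trans hlt0 hs0none
    have hsP : s ∈ acceptables (P i) := (prefLt_none_iff_acc (hP i)).1 hsnone
    have hidx : (acceptables (P i)).idxOf s < (acceptables (P i)).idxOf s0 :=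
      (prefLt_iff_accIndex (hP i) hsP hs0P).1 hlt0
    have hs0k : (acceptables (P i)).idxOf s0 < k := by
      rw [haccR] at hs0L
      exact indexOf_lt_of_mem_take hs0L
    have hsL : s ∈ acceptables (truncate (P i) k) := by
      rw [haccR]
      exact mem_take_of_indexOf_lt hsP (by omega)
    have hidxL : (acceptables (truncate (P i) k)).idxOf s <
        (acceptables (truncate (P i) k)).idxOf s0 := by
      rw [haccR, indexOf_take _ k _ (haccR ▸ hsL), indexOf_take _ k _ (haccR ▸ hs0L)]
      exact hidx
    have := find?_first hfind s hsL (decide_eq_true hA)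
    omega
  | none =>
    refine ⟨rfl, ?_, ?_⟩
    · rw [hμi] at hlt
      exact (prefLt_none_iff_acc (hP i)).1 hlt
    · intro hsL
      have hfind : (acceptables (truncate (P i) k)).find?
          (fun s => decide (availCount pr (GS (fun j => truncate (P j) k) prio q) i s < q s)) =
            none := by
        rw [← hchar i]
        exact hμi
      have := List.find?_eq_none.1 hfind s hsL
      simp only [decide_eq_true_eq] at this
      exact this hA

end Bridge


end Aux

/-- Proposition 3: with common priority and `k > 1`, the constrained
serial dictatorship `SD^k` (that is, `GS^k` under common priority) is stable at
`(P,≻,q)` iff it is not manipulable at `(P,≻,q)`. -/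
theorem sdk_stable_iff_not_manipulable
    {I S : Type*} [Fintype I] [DecidableEq I] [Fintype S] [DecidableEq S]
    (hIS : Fintype.card S < Fintype.card I)
    (P : I → List (Option S)) (prio : S → List I) (q : S → ℕ)
    (hP : ∀ i, ValidPref (P i)) (hprio : ∀ s, ValidPrio (prio s))
    (hcp : ∀ s s' : S, prio s = prio s')
    (k : ℕ) (hk : 1 < k) :
    IsStable P prio q (GSk k P prio q) ↔ NotManipulable (fun R => GSk k R prio q) P := by
  classical
  rcases isEmpty_or_nonempty S with hS | hS
  · -- no schools: both sides hold trivially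
    have hall : ∀ o : Option S, o = none := fun o => by
      cases o with
      | none => rfl
      | some s => exact (hS.false s).elim
    have h1 : IsStable P prio q (GSk k P prio q) := by
      refine ⟨fun i => ?_, fun i hb => ?_⟩
      · rw [hall (GSk k P prio q i)]
        exact lt_irrefl _
      · obtain ⟨s, _⟩ := hb
        exact (hS.false s).elim
    have h2 : NotManipulable (fun R => GSk k R prio q) P := by
      rintro i ⟨Q, hQ, hlt⟩
      have e1 : (fun R => GSk k R prio q) (Function.update P i Q) i = none := hall _
      have e2 : GSk k P prio q i = none := hall _
      rw [e1] at hlt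
      have hlt2 : prefLt (P i) none (GSk k P prio q i) := hlt
      rw [e2] at hlt2
      exact lt_irrefl _ hlt2
    exact iff_of_true h1 h2
  · obtain ⟨s₀⟩ := hS
    have hc : ∀ s, prio s = prio s₀ := fun s => hcp s s₀
    have hpr : ValidPrio (prio s₀) := hprio s₀
    set pr := prio s₀ with hprdef
    have hndR : ∀ j, (acceptables (truncate (P j) k)).Nodup := fun j => by
      rw [acceptables_truncate]
      exact (List.take_sublist _ _).nodup (acc_nodup (hP j).1)
    have hlenR : ∀ j, (acceptables (truncate (P j) k)).length ≤ Fintype.card S :=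
      fun j => (hndR j).length_le_card
    have hchar := gs_char (fun j => truncate (P j) k) prio q pr hpr hc hndR
    have hGSk : ∀ j, GSk k P prio q j = GS (fun j => truncate (P j) k) prio q j :=
      fun j => rfl
    -- individual rationality always holds
    have hIR : IndividuallyRational P (GSk k P prio q) := by
      intro i
      cases hμi : GSk k P prio q i with
      | none =>
        exact lt_irrefl _
      | some s =>
        have hsL : s ∈ acceptables (truncate (P i) k) := by
          apply List.mem_of_find?_eq_some
          rw [← hchar i, ← hGSk i]
          exact hμi
        rw [acceptables_truncate] at hsL
        have hsP : s ∈ acceptables (P i) := List.take_subset _ _ hsL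
        have := (prefLt_none_iff_acc (hP i)).2 hsP
        unfold prefLt at this ⊢
        omega
    constructor
    · -- stable → not manipulable
      rintro hst i ⟨Q, hQ, hlt⟩
      have hlt' : prefLt (P i)
          (GS (fun j => truncate ((Function.update P i Q) j) k) prio q i)
          (GS (fun j => truncate (P j) k) prio q i) := hlt
      have hndR' : ∀ j, (acceptables (truncate ((Function.update P i Q) j) k)).Nodup := by
        intro j
        rw [acceptables_truncate]
        by_cases hj : j = i
        · subst hj
          rw [Function.update_self]
          exact (List.take_sublist _ _).nodup (acc_nodup hQ.1)
        · rw [Function.update_of_ne hj]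
          exact (List.take_sublist _ _).nodup (acc_nodup (hP j).1)
      have hchar' := gs_char (fun j => truncate ((Function.update P i Q) j) k)
        prio q pr hpr hc hndR'
      have hagree : ∀ j, pr.idxOf j < pr.idxOf i →
          truncate (P j) k = truncate ((Function.update P i Q) j) k := by
        intro j hj
        have hji : j ≠ i := fun he => by
          subst he
          exact lt_irrefl _ hj
        rw [Function.update_of_ne hji]
      have hcnt := char_agree_count (I := I) q pr hpr hchar hchar' i hagree
      cases hνi : GS (fun j => truncate ((Function.update P i Q) j) k) prio q i with
      | none =>
        rw [hνi] at hlt'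
        have : prefLt (P i) none (GSk k P prio q i) := hlt'
        exact hIR i this
      | some s' =>
        have hfind' : (acceptables (truncate ((Function.update P i Q) i) k)).find?
            (fun s => decide (availCount pr
              (GS (fun j => truncate ((Function.update P i Q) j) k) prio q) i s < q s)) =
              some s' := by
          rw [← hchar' i]
          exact hνi
        have hA' := List.find?_some hfind'
        simp only [decide_eq_true_eq] at hA'
        have hA : availCount pr (GS (fun j => truncate (P j) k) prio q) i s' < q s' := by
          rw [hcnt s']
          exact hA'
        rw [hνi] at hlt'
        obtain ⟨hμnone, hsP, _⟩ := blocked_unmatched P prio q pr k hP hpr hc hA hlt'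
        have hμnone' : GSk k P prio q i = none := hμnone
        apply hst.2 i
        refine ⟨s', ?_, ?_⟩
        · rw [hμnone']
          rw [hμnone] at hlt'
          exact hlt'
        · by_cases hcap :
            (Finset.univ.filter (fun j => GSk k P prio q j = some s')).card < q s'
          · exact Or.inl hcap
          · right
            push_neg at hcap
            have hsub : Finset.univ.filter (fun j => pr.idxOf j < pr.idxOf i ∧
                GS (fun j => truncate (P j) k) prio q j = some s') ⊆
                Finset.univ.filter (fun j => GSk k P prio q j = some s') := by
              intro j hj
              rw [Finset.mem_filter] at hj ⊢
              refine ⟨hj.1, ?_⟩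
              rw [hGSk j]
              exact hj.2.2
            have hcard : (Finset.univ.filter (fun j => pr.idxOf j < pr.idxOf i ∧
                GS (fun j => truncate (P j) k) prio q j = some s')).card <
                (Finset.univ.filter (fun j => GSk k P prio q j = some s')).card := by
              have : availCount pr (GS (fun j => truncate (P j) k) prio q) i s' < q s' := hA
              unfold availCount at this
              omega
            obtain ⟨j, hjT, hjH⟩ := Finset.exists_of_ssubset
              (Finset.ssubset_iff_subset_ne.2 ⟨hsub, fun he => by rw [he] at hcard; omega⟩)
            rw [Finset.mem_filter] at hjT
            have hjs : GSk k P prio q j = some s' := hjT.2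
            have hjnlt : ¬ (pr.idxOf j < pr.idxOf i) := by
              intro hlt2
              exact hjH (Finset.mem_filter.2 ⟨Finset.mem_univ j, hlt2, by
                rw [← hGSk j]; exact hjs⟩)
            have hji : j ≠ i := by
              intro he
              rw [he, hμnone'] at hjs
              cases hjs
            have hidxne : pr.idxOf j ≠ pr.idxOf i := by
              intro he
              exact hji ((List.idxOf_inj (hpr.2 j)).1 he)
            refine ⟨j, hjs, ?_⟩
            unfold prioLt
            rw [hc s']
            omega
    · -- not manipulable → stable
      intro hnm
      refine ⟨hIR, ?_⟩
      rintro i ⟨s, hpl, hor⟩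
      have hcap := card_matched_le (fun j => truncate (P j) k) prio q pr hpr hc hlenR s
      have hcapμ : (Finset.univ.filter (fun j => GSk k P prio q j = some s)).card ≤ q s := by
        have hset : Finset.univ.filter (fun j => GSk k P prio q j = some s) =
            Finset.univ.filter (fun j => GS (fun j => truncate (P j) k) prio q j = some s) := by
          apply Finset.filter_congr
          intro j _
          rw [hGSk j]
        rw [hset]
        exact hcap
      have hA : availCount pr (GS (fun j => truncate (P j) k) prio q) i s < q s := by
        have hsub : Finset.univ.filter (fun j => pr.idxOf j < pr.idxOf i ∧
            GS (fun j => truncate (P j) k) prio q j = some s) ⊆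
            Finset.univ.filter (fun j => GSk k P prio q j = some s) := by
          intro j hj
          rw [Finset.mem_filter] at hj ⊢
          refine ⟨hj.1, ?_⟩
          rw [hGSk j]
          exact hj.2.2
        rcases hor with hfree | ⟨j, hj, hpj⟩
        · have := Finset.card_le_card hsub
          unfold availCount
          omega
        · have hij : pr.idxOf i < pr.idxOf j := by
            have := hpj
            unfold prioLt at this
            rw [hc s] at this
            exact this
          have hjT : j ∈ Finset.univ.filter (fun j => GSk k P prio q j = some s) :=
            Finset.mem_filter.2 ⟨Finset.mem_univ j, hj⟩
          have hsub' : Finset.univ.filter (fun j => pr.idxOf j < pr.idxOf i ∧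
              GS (fun j => truncate (P j) k) prio q j = some s) ⊆
              (Finset.univ.filter (fun j => GSk k P prio q j = some s)).erase j := by
            intro j' hj'
            rw [Finset.mem_filter] at hj'
            refine Finset.mem_erase.2 ⟨?_, hsub (Finset.mem_filter.2 hj')⟩
            intro he
            subst he
            omega
          have hce := Finset.card_erase_of_mem hjT
          have hc1 : 1 ≤ (Finset.univ.filter (fun j => GSk k P prio q j = some s)).card :=
            Finset.card_pos.2 ⟨j, hjT⟩
          have := Finset.card_le_card hsub'
          unfold availCount
          omega
      have hpl' : prefLt (P i) (some s) (GS (fun j => truncate (P j) k) prio q i) := hpl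
      obtain ⟨hμnone, hsP, hsnotL⟩ := blocked_unmatched P prio q pr k hP hpr hc hA hpl'
      -- build the manipulation
      have hQv : ValidPref ((some s) :: (P i).erase (some s)) := by
        constructor
        · rw [List.nodup_cons]
          refine ⟨?_, (hP i).1.erase _⟩
          intro hmem
          rw [(hP i).1.mem_erase_iff] at hmem
          exact hmem.1 rfl
        · intro x
          by_cases hx : x = some s
          · subst hx
            exact List.mem_cons_self
          · exact List.mem_cons_of_mem _ (((hP i).1.mem_erase_iff).2 ⟨hx, (hP i).2 x⟩)
      apply hnm i
      refine ⟨(some s) :: (P i).erase (some s), hQv, ?_⟩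
      have hndR' : ∀ j, (acceptables (truncate
          ((Function.update P i ((some s) :: (P i).erase (some s))) j) k)).Nodup := by
        intro j
        rw [acceptables_truncate]
        by_cases hj : j = i
        · subst hj
          rw [Function.update_self]
          exact (List.take_sublist _ _).nodup (acc_nodup hQv.1)
        · rw [Function.update_of_ne hj]
          exact (List.take_sublist _ _).nodup (acc_nodup (hP j).1)
      have hchar' := gs_char (fun j => truncate
        ((Function.update P i ((some s) :: (P i).erase (some s))) j) k) prio q pr hpr hc hndR'
      have hagree : ∀ j, pr.idxOf j < pr.idxOf i → truncate (P j) k =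
          truncate ((Function.update P i ((some s) :: (P i).erase (some s))) j) k := by
        intro j hj
        have hji : j ≠ i := fun he => by
          subst he
          exact lt_irrefl _ hj
        rw [Function.update_of_ne hji]
      have hcnt := char_agree_count (I := I) q pr hpr hchar hchar' i hagree
      have haccR'i : acceptables (truncate
          ((Function.update P i ((some s) :: (P i).erase (some s))) i) k) =
          s :: ((acceptables ((P i).erase (some s))).take (k - 1)) := by
        rw [Function.update_self, acceptables_truncate, acceptables_cons_some,
          show k = (k - 1) + 1 by omega, List.take_succ_cons]
        simp
      have hν : GS (fun j => truncate
          ((Function.update P i ((some s) :: (P i).erase (some s))) j) k) prio q i =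
          some s := by
        rw [hchar' i, haccR'i]
        apply List.find?_cons_of_pos
        simp only [decide_eq_true_eq]
        rw [← hcnt s]
        exact hA
      have hμnone' : GSk k P prio q i = none := hμnone
      have hgoal : prefLt (P i)
          ((fun R => GSk k R prio q)
            (Function.update P i ((some s) :: (P i).erase (some s))) i)
          (GSk k P prio q i) := by
        have he1 : (fun R => GSk k R prio q)
            (Function.update P i ((some s) :: (P i).erase (some s))) i = some s := hν
        rw [he1, hμnone']
        exact (prefLt_none_iff_acc (hP i)).2 hsP
      exact hgoal


end SchoolChoice
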